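/- For all positive reals α and β, ∫₀^∞ (1/√t)·exp(−αt − β/t) dt = √(π/α)·e^{−2√(αβ)}. -/

import Mathlib

open MeasureTheory Real Set

section aux
variable {a b c : ℝ}

lemma aux_deriv (hb : 0 < b) :
    ∀ x ∈ Ioi (0:ℝ), HasDerivWithinAt (fun u => a * u - b / u) (a + b / x ^ 2) (Ioi (0:ℝ)) x := by
  intro x hx
  have hx0 : x ≠ 0 := (mem_Ioi.mp hx).ne'
  have h1 : HasDerivAt (fun u : ℝ => a * u) a x := by
    simpa using (hasDerivAt_id x).const_mul a
  have h2 : HasDerivAt (fun u : ℝ => b / u) (-(b / x ^ 2)) x := by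
    simpa [div_eq_mul_inv, mul_comm, neg_div] using (hasDerivAt_inv hx0).const_mul b
  have h3 := (h1.sub h2).hasDerivWithinAt (s := Ioi (0:ℝ))
  rw [sub_neg_eq_add] at h3
  exact h3

lemma aux_inj (ha : 0 < a) (hb : 0 < b) :
    InjOn (fun u => a * u - b / u) (Ioi (0:ℝ)) := by
  have hm : StrictMonoOn (fun u => a * u - b / u) (Ioi (0:ℝ)) := by
    intro x hx y hy hxy
    have hx0 : (0:ℝ) < x := hx
    have hy0 : (0:ℝ) < y := hy
    have h2 : b / y ≤ b / x := div_le_div_of_nonneg_left hb.le hx0 hxy.le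
    have h1 : a * x < a * y := mul_lt_mul_of_pos_left hxy ha
    simp only
    linarith
  exact hm.injOn

lemma aux_image (ha : 0 < a) (hb : 0 < b) :
    (fun u => a * u - b / u) '' Ioi (0:ℝ) = univ := by
  ext y
  simp only [mem_image, mem_univ, iff_true, mem_Ioi]
  set s := Real.sqrt (y ^ 2 + 4 * (a * b)) with hs
  have hsq : s ^ 2 = y ^ 2 + 4 * (a * b) := Real.sq_sqrt (by nlinarith)
  have habs : |y| < s := by
    rw [← Real.sqrt_sq_eq_abs, hs]
    exact Real.sqrt_lt_sqrt (sq_nonneg y) (by nlinarith)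
  have hy1 : -y < s := by have := neg_abs_le y; linarith
  set u := (y + s) / (2 * a) with hu
  have hupos : 0 < u := div_pos (by linarith) (by linarith)
  refine ⟨u, hupos, ?_⟩
  have key : a * u ^ 2 - y * u - b = 0 := by
    rw [hu]; field_simp; nlinarith [hsq]
  have hune : u ≠ 0 := hupos.ne'
  field_simp
  nlinarith [key]

lemma inv_deriv (c : ℝ) :
    ∀ x ∈ Ioi (0:ℝ), HasDerivWithinAt (fun u => c / u) (-(c / x ^ 2)) (Ioi (0:ℝ)) x := by
  intro x hx
  have hx0 : x ≠ 0 := (mem_Ioi.mp hx).ne'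
  have h2 : HasDerivAt (fun u : ℝ => c / u) (-(c / x ^ 2)) x := by
    simpa [div_eq_mul_inv, mul_comm, neg_div] using (hasDerivAt_inv hx0).const_mul c
  exact h2.hasDerivWithinAt

lemma invv_inj (hc : 0 < c) : InjOn (fun u : ℝ => c / u) (Ioi (0:ℝ)) := by
  intro x hx y hy h
  have hx0 : (0:ℝ) < x := hx
  have hy0 : (0:ℝ) < y := hy
  simp only at h
  rw [div_eq_div_iff hx0.ne' hy0.ne'] at h
  exact (mul_left_cancel₀ hc.ne' h).symm

lemma inv_image (hc : 0 < c) : (fun u : ℝ => c / u) '' Ioi (0:ℝ) = Ioi (0:ℝ) := by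
  ext y
  simp only [mem_image, mem_Ioi]
  constructor
  · rintro ⟨x, hx, rfl⟩; exact div_pos hc hx
  · intro hy; exact ⟨c / y, div_pos hc hy, by field_simp⟩

lemma aux_key (ha : 0 < a) (hb : 0 < b) :
    ∫ u in Ioi (0:ℝ), Real.exp (-(a * u - b / u) ^ 2) = Real.sqrt π / (2 * a) := by
  set E : ℝ → ℝ := fun u => Real.exp (-(a * u - b / u) ^ 2) with hE
  set c := b / a with hc
  have hc0 : 0 < c := div_pos hb ha
  have hEm : Measurable E := by
    apply Real.measurable_exp.comp
    apply Measurable.neg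
    exact ((measurable_const.mul measurable_id).sub (measurable_const.div measurable_id)).pow_const 2
  -- CV 1 : Gaussian over ℝ
  have CV := integral_image_eq_integral_abs_deriv_smul measurableSet_Ioi
    (aux_deriv (a := a) hb) (aux_inj ha hb) (fun y => Real.exp (-y ^ 2))
  rw [aux_image ha hb] at CV
  have hGauss : ∫ x in (univ : Set ℝ), Real.exp (-x ^ 2) = Real.sqrt π := by
    rw [setIntegral_univ]
    simpa using integral_gaussian 1
  rw [hGauss] at CV
  -- integrability of combined integrand
  have hint : IntegrableOn (fun x => |a + b / x ^ 2| • Real.exp (-(a * x - b / x) ^ 2))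
      (Ioi (0:ℝ)) :=
    (integrableOn_image_iff_integrableOn_abs_deriv_smul measurableSet_Ioi
      (aux_deriv (a := a) hb) (aux_inj ha hb) (fun y => Real.exp (-y ^ 2))).mp
      (by rw [aux_image ha hb, integrableOn_univ]
          simpa using integrable_exp_neg_mul_sq one_pos)
  have hbound : ∀ x ∈ Ioi (0:ℝ), a + b / x ^ 2 > 0 := by
    intro x hx
    have hx0 : (0:ℝ) < x := hx
    positivity
  have h1 : IntegrableOn (fun x => a * E x) (Ioi (0:ℝ)) := by
    apply hint.mono' ((measurable_const.mul hEm).aestronglyMeasurable)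
    filter_upwards [ae_restrict_mem measurableSet_Ioi] with x hx
    have hx0 : (0:ℝ) < x := hx
    have hEpos : 0 < E x := Real.exp_pos _
    have h := hbound x hx
    simp only [Pi.mul_apply]
    rw [smul_eq_mul, abs_of_pos h, Real.norm_eq_abs, abs_of_pos (by positivity)]
    have : 0 < b / x ^ 2 := by positivity
    nlinarith
  have h2 : IntegrableOn (fun x => (b / x ^ 2) * E x) (Ioi (0:ℝ)) := by
    apply hint.mono' (((measurable_const.div (measurable_id.pow_const 2)).mul
      hEm).aestronglyMeasurable)
    filter_upwards [ae_restrict_mem measurableSet_Ioi] with x hx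
    simp only [id_eq, Pi.mul_apply, Pi.div_apply]
    have hx0 : (0:ℝ) < x := hx
    have hEpos : 0 < E x := Real.exp_pos _
    have h := hbound x hx
    have hbx : 0 < b / x ^ 2 := by positivity
    rw [smul_eq_mul, abs_of_pos h, Real.norm_eq_abs, abs_of_pos (by positivity)]
    nlinarith
  have split : ∫ x in Ioi (0:ℝ), |a + b / x ^ 2| • Real.exp (-(a * x - b / x) ^ 2) =
      (∫ x in Ioi (0:ℝ), a * E x) + ∫ x in Ioi (0:ℝ), (b / x ^ 2) * E x := by
    rw [← integral_add h1 h2]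
    apply setIntegral_congr_fun measurableSet_Ioi
    intro x hx
    show |a + b / x ^ 2| • Real.exp (-(a * x - b / x) ^ 2) = a * E x + b / x ^ 2 * E x
    rw [smul_eq_mul, abs_of_pos (hbound x hx)]
    simp only [hE]
    ring
  -- CV 2 : inversion
  have CV2 := integral_image_eq_integral_abs_deriv_smul measurableSet_Ioi
    (inv_deriv c) (invv_inj hc0) E
  rw [inv_image hc0] at CV2
  have h2eq : ∫ x in Ioi (0:ℝ), (b / x ^ 2) * E x = a * ∫ x in Ioi (0:ℝ), E x := by
    rw [CV2, ← integral_const_mul]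
    apply setIntegral_congr_fun measurableSet_Ioi
    intro x hx
    have hx0 : (0:ℝ) < x := hx
    have hxne : x ≠ 0 := hx0.ne'
    have hEeq : E (c / x) = E x := by
      have harg : a * (c / x) - b / (c / x) = -(a * x - b / x) := by
        rw [hc]; field_simp; ring
      simp only [hE, harg, neg_sq]
    show b / x ^ 2 * E x = a * (|(-(c / x ^ 2))| • E (c / x))
    rw [smul_eq_mul, hEeq, abs_neg, abs_of_pos (div_pos hc0 (pow_pos hx0 2)), hc]
    field_simp
  rw [split, integral_const_mul, h2eq] at CV
  have : Real.sqrt π = 2 * a * ∫ x in Ioi (0:ℝ), E x := by linarith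
  rw [eq_div_iff (by positivity)]
  linarith

end aux

lemma sq_deriv : ∀ x ∈ Ioi (0:ℝ), HasDerivWithinAt (fun u : ℝ => u ^ 2) (2 * x) (Ioi (0:ℝ)) x := by
  intro x hx
  simpa using (hasDerivAt_pow 2 x).hasDerivWithinAt

lemma sq_inj : InjOn (fun u : ℝ => u ^ 2) (Ioi (0:ℝ)) := by
  intro x hx y hy h
  have hx0 : (0:ℝ) < x := hx
  have hy0 : (0:ℝ) < y := hy
  have := congrArg Real.sqrt h
  rwa [Real.sqrt_sq hx0.le, Real.sqrt_sq hy0.le] at this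

lemma sq_image : (fun u : ℝ => u ^ 2) '' Ioi (0:ℝ) = Ioi (0:ℝ) := by
  ext y
  simp only [mem_image, mem_Ioi]
  constructor
  · rintro ⟨x, hx, rfl⟩; exact pow_pos hx 2
  · intro hy; exact ⟨Real.sqrt y, Real.sqrt_pos.mpr hy, Real.sq_sqrt hy.le⟩


/-- Lemma 9 (Itô–McKean, p. 17): for all positive reals `α` and `β`,
`∫_0^∞ t^{-1/2} exp(-α t - β / t) dt = √(π/α) e^{-2√(αβ)}`. -/
theorem statement12 (α β : ℝ) (hα : 0 < α) (hβ : 0 < β) :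
    ∫ t in Set.Ioi (0 : ℝ), (1 / Real.sqrt t) * Real.exp (-α * t - β / t) =
      Real.sqrt (π / α) * Real.exp (-2 * Real.sqrt (α * β)) := by
  set a := Real.sqrt α with haa
  set b := Real.sqrt β with hbb
  have ha : 0 < a := Real.sqrt_pos.mpr hα
  have hb : 0 < b := Real.sqrt_pos.mpr hβ
  have ha2 : a ^ 2 = α := Real.sq_sqrt hα.le
  have hb2 : b ^ 2 = β := Real.sq_sqrt hβ.le
  have CV3 := integral_image_eq_integral_abs_deriv_smul measurableSet_Ioi
    sq_deriv sq_inj (fun t => (1 / Real.sqrt t) * Real.exp (-α * t - β / t))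
  rw [sq_image] at CV3
  rw [CV3]
  have congr1 : ∫ x in Ioi (0:ℝ),
      |2 * x| • ((1 / Real.sqrt (x ^ 2)) * Real.exp (-α * x ^ 2 - β / x ^ 2)) =
      ∫ x in Ioi (0:ℝ), (2 * Real.exp (-2 * (a * b))) * Real.exp (-(a * x - b / x) ^ 2) := by
    apply setIntegral_congr_fun measurableSet_Ioi
    intro x hx
    have hx0 : (0:ℝ) < x := hx
    have hxne : x ≠ 0 := hx0.ne'
    have hsx : Real.sqrt (x ^ 2) = x := Real.sqrt_sq hx0.le
    have hexp : -α * x ^ 2 - β / x ^ 2 = (-(a * x - b / x) ^ 2) + (-2 * (a * b)) := by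
      rw [← ha2, ← hb2]; field_simp; ring
    show |2 * x| • ((1 / Real.sqrt (x ^ 2)) * Real.exp (-α * x ^ 2 - β / x ^ 2)) = _
    rw [hsx, hexp, Real.exp_add, smul_eq_mul, abs_of_pos (by positivity)]
    field_simp
  rw [congr1, integral_const_mul, aux_key ha hb]
  rw [Real.sqrt_div Real.pi_nonneg α, Real.sqrt_mul hα.le, ← haa, ← hbb]
  field_simp
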